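/- For x > 0 and r ≥ 0 define h_x(r) = ∫_0^x 2·sinh(πt)·cosh(πr) / (cosh(π(r+t))·cosh(π(r−t))) dt. Then for every real x ≥ 1: h_x(r) > 1/4 for all r with 1 ≤ r ≤ x, and h_x(r) > 3/100 for all r with 0 ≤ r ≤ 1. -/

import Mathlib

open Real

/-- `h_x(r) = ∫_0^x 2 sinh(πt) cosh(πr) / (cosh(π(r+t)) cosh(π(r−t))) dt`. -/
noncomputable def hFun (x r : ℝ) : ℝ :=
  ∫ t in (0:ℝ)..x,
    2 * Real.sinh (Real.pi * t) * Real.cosh (Real.pi * r) /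
      (Real.cosh (Real.pi * (r + t)) * Real.cosh (Real.pi * (r - t)))

lemma cosh_prod (r t : ℝ) :
    Real.cosh (π * (r + t)) * Real.cosh (π * (r - t)) =
      Real.sinh (π * r) ^ 2 + Real.cosh (π * t) ^ 2 := by
  have h1 := Real.cosh_sq_sub_sinh_sq (π * r)
  have h2 := Real.cosh_sq_sub_sinh_sq (π * t)
  rw [mul_add, mul_sub, Real.cosh_add, Real.cosh_sub]
  nlinarith [h1, h2]

lemma contF (r : ℝ) : Continuous (fun t : ℝ =>
    2 * Real.sinh (π * t) * Real.cosh (π * r) /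
      (Real.cosh (π * (r + t)) * Real.cosh (π * (r - t)))) := by
  apply Continuous.div (by continuity) (by continuity)
  exact fun t => (mul_pos (Real.cosh_pos _) (Real.cosh_pos _)).ne'

lemma arctan_lt_self' {x : ℝ} (hx : 0 < x) : Real.arctan x < x := by
  have h1 : 0 < Real.arctan x := by simpa using Real.arctan_strictMono hx
  have h2 := Real.arctan_lt_pi_div_two x
  have := Real.lt_tan h1 h2
  rwa [Real.tan_arctan] at this

lemma hFun_eq (r x : ℝ) (hr : 0 < r) :
    hFun x r = 2 * Real.cosh (π * r) / (π * Real.sinh (π * r)) *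
      (Real.arctan (Real.cosh (π * x) / Real.sinh (π * r)) -
        Real.arctan (1 / Real.sinh (π * r))) := by
  have hs : 0 < Real.sinh (π * r) := Real.sinh_pos_iff.2 (by positivity)
  have key : ∀ t : ℝ, HasDerivAt
      (fun t => 2 * Real.cosh (π * r) / (π * Real.sinh (π * r)) *
        Real.arctan (Real.cosh (π * t) / Real.sinh (π * r)))
      (2 * Real.sinh (π * t) * Real.cosh (π * r) /
        (Real.cosh (π * (r + t)) * Real.cosh (π * (r - t)))) t := by
    intro t
    have hlin : HasDerivAt (fun t : ℝ => π * t) π t := by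
      simpa using (hasDerivAt_id t).const_mul π
    have h0 : HasDerivAt (fun t : ℝ => Real.cosh (π * t)) (Real.sinh (π * t) * π) t :=
      (Real.hasDerivAt_cosh (π * t)).comp t hlin
    have h1 : HasDerivAt (fun t : ℝ => Real.cosh (π * t) / Real.sinh (π * r))
        (Real.sinh (π * t) * π / Real.sinh (π * r)) t := h0.div_const _
    have h3 := (h1.arctan).const_mul (2 * Real.cosh (π * r) / (π * Real.sinh (π * r)))
    refine h3.congr_deriv ?_
    rw [cosh_prod]
    have hd : (0:ℝ) < Real.sinh (π * r) ^ 2 + Real.cosh (π * t) ^ 2 :=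
      add_pos_of_nonneg_of_pos (sq_nonneg _) (pow_pos (Real.cosh_pos _) 2)
    have hπ := Real.pi_pos
    have hd2 : (0:ℝ) < 1 + (Real.cosh (π * t) / Real.sinh (π * r)) ^ 2 := by positivity
    field_simp
  unfold hFun
  rw [intervalIntegral.integral_eq_sub_of_hasDerivAt (fun t _ => key t)
    ((contF r).intervalIntegrable _ _)]
  rw [mul_zero, Real.cosh_zero]
  ring

lemma integrand_nonneg (r : ℝ) {t : ℝ} (ht : 0 ≤ t) :
    0 ≤ 2 * Real.sinh (π * t) * Real.cosh (π * r) /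
      (Real.cosh (π * (r + t)) * Real.cosh (π * (r - t))) := by
  have h1 : 0 ≤ Real.sinh (π * t) := Real.sinh_nonneg_iff.2 (by positivity)
  have h2 := Real.cosh_pos (π * r)
  have h3 := Real.cosh_pos (π * (r + t))
  have h4 := Real.cosh_pos (π * (r - t))
  positivity

lemma hFun_mono (x r : ℝ) (hx : 1 ≤ x) : hFun 1 r ≤ hFun x r := by
  have h1 : IntervalIntegrable _ MeasureTheory.volume (0:ℝ) 1 :=
    (contF r).intervalIntegrable (0:ℝ) 1
  have h2 : IntervalIntegrable _ MeasureTheory.volume (1:ℝ) x :=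
    (contF r).intervalIntegrable (1:ℝ) x
  have hsplit := intervalIntegral.integral_add_adjacent_intervals h1 h2
  unfold hFun
  rw [← hsplit]
  have : 0 ≤ ∫ t in (1:ℝ)..x, 2 * Real.sinh (π * t) * Real.cosh (π * r) /
      (Real.cosh (π * (r + t)) * Real.cosh (π * (r - t))) :=
    intervalIntegral.integral_nonneg hx (fun t ht => integrand_nonneg r (by linarith [ht.1]))
  linarith

lemma sinh_pi_bounds : 19 / 2 < Real.sinh π ∧ Real.sinh π < 13 := by
  have he1 := Real.exp_one_gt_d9
  have he2 := Real.exp_one_lt_d9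
  have hpi1 : 3 < π := Real.pi_gt_three
  have hpi2 : π < 3.15 := Real.pi_lt_d2
  have h3 : Real.exp 3 = Real.exp 1 ^ 3 := by
    rw [← Real.exp_nat_mul]; norm_num
  have hexp3_lb : (20:ℝ) < Real.exp 3 := by
    rw [h3]
    calc (20:ℝ) < 2.7182818283 ^ 3 := by norm_num
      _ ≤ Real.exp 1 ^ 3 := pow_le_pow_left₀ (by norm_num) he1.le 3
  have hexp3_ub : Real.exp 3 < 20.09 := by
    rw [h3]
    calc Real.exp 1 ^ 3 ≤ 2.7182818286 ^ 3 :=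
        pow_le_pow_left₀ (Real.exp_pos 1).le he2.le 3
      _ < 20.09 := by norm_num
  have hlb : (20:ℝ) < Real.exp π := lt_of_lt_of_le hexp3_lb (Real.exp_le_exp.2 hpi1.le)
  have hub : Real.exp π < 26 := by
    have h15 : Real.exp 0.15 < 20 / 17 := by
      have h := Real.add_one_lt_exp (x := -0.15) (by norm_num)
      have hmul : Real.exp 0.15 * Real.exp (-0.15) = 1 := by
        rw [← Real.exp_add]; norm_num
      nlinarith [Real.exp_pos (0.15 : ℝ), Real.exp_pos (-0.15 : ℝ)]
    have hlt : Real.exp π < Real.exp 3.15 := Real.exp_lt_exp.2 hpi2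
    have h315 : Real.exp 3.15 = Real.exp 3 * Real.exp 0.15 := by
      rw [← Real.exp_add]; norm_num
    nlinarith [Real.exp_pos (0.15:ℝ), Real.exp_pos (3:ℝ)]
  have hneg : Real.exp (-π) < 1 := Real.exp_lt_one_iff.2 (by linarith)
  have hnegpos : 0 < Real.exp (-π) := Real.exp_pos _
  rw [Real.sinh_eq]
  constructor <;> nlinarith

theorem statement10 :
    ∀ x : ℝ, 1 ≤ x →
      (∀ r : ℝ, 1 ≤ r → r ≤ x → 1/4 < hFun x r) ∧
      (∀ r : ℝ, 0 ≤ r → r ≤ 1 → 3/100 < hFun x r) := by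
  intro x hx
  have hπ := Real.pi_pos
  obtain ⟨hs1, hs2⟩ := sinh_pi_bounds
  constructor
  · intro r hr1 hrx
    have hr0 : 0 < r := by linarith
    rw [hFun_eq r x hr0]
    set s := Real.sinh (π * r) with hs_def
    set c := Real.cosh (π * r) with hc_def
    have hs : (19:ℝ)/2 < s := by
      have : Real.sinh π ≤ s := by
        rw [hs_def]
        exact Real.sinh_le_sinh.2 (by nlinarith)
      linarith
    have hspos : 0 < s := by linarith
    have hcs : s < c := by
      have h1 := Real.cosh_sub_sinh (π * r)
      have h2 := Real.exp_pos (-(π * r))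
      linarith
    have hA : π / 4 < Real.arctan (Real.cosh (π * x) / s) := by
      have hcc : c ≤ Real.cosh (π * x) := by
        rw [hc_def, Real.cosh_le_cosh]
        rw [abs_of_pos (by positivity), abs_of_pos (by positivity)]
        nlinarith
      have h1 : 1 < Real.cosh (π * x) / s := by
        rw [lt_div_iff₀ hspos]; nlinarith
      calc π / 4 = Real.arctan 1 := Real.arctan_one.symm
        _ < _ := Real.arctan_strictMono h1
    have hB : Real.arctan (1 / s) < 2 / 19 := by
      have h1 : (1:ℝ)/s < 2/19 := by
        rw [div_lt_div_iff₀ hspos (by norm_num)]; linarith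
      linarith [arctan_lt_self' (x := 1 / s) (by positivity)]
    have hbr : π / 8 < Real.arctan (Real.cosh (π * x) / s) - Real.arctan (1 / s) := by
      nlinarith [Real.pi_gt_three]
    have hpre : 2 / π ≤ 2 * c / (π * s) := by
      rw [div_le_div_iff₀ hπ (by positivity)]
      nlinarith
    calc (1:ℝ)/4 = 2/π * (π/8) := by field_simp; ring
      _ < 2/π * (Real.arctan (Real.cosh (π * x) / s) - Real.arctan (1 / s)) :=
          mul_lt_mul_of_pos_left hbr (by positivity)
      _ ≤ _ := mul_le_mul_of_nonneg_right hpre (by linarith)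
  · intro r hr0 hr1
    have step1 : hFun 1 r ≤ hFun x r := hFun_mono x r hx
    have hcπ : (0:ℝ) < Real.cosh π := Real.cosh_pos π
    have hsπ : (0:ℝ) < Real.sinh π := by linarith
    have step2 : hFun 1 1 / Real.cosh π ≤ hFun 1 r := by
      have heq : hFun 1 1 / Real.cosh π = ∫ t in (0:ℝ)..1,
          (2 * Real.sinh (π * t) * Real.cosh (π * 1) /
            (Real.cosh (π * (1 + t)) * Real.cosh (π * (1 - t)))) / Real.cosh π := by
        unfold hFun
        rw [intervalIntegral.integral_div]
      rw [heq]
      unfold hFun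
      apply intervalIntegral.integral_mono_on zero_le_one
        (((contF 1).div_const _).intervalIntegrable _ _)
        ((contF r).intervalIntegrable _ _)
      intro t ht
      rw [cosh_prod, cosh_prod, mul_one]
      have hu : (0:ℝ) < Real.cosh (π * t) := Real.cosh_pos _
      have hst : 0 ≤ Real.sinh (π * t) :=
        Real.sinh_nonneg_iff.2 (mul_nonneg hπ.le ht.1)
      have hsr : 0 ≤ Real.sinh (π * r) :=
        Real.sinh_nonneg_iff.2 (mul_nonneg hπ.le hr0)
      have hsrs : Real.sinh (π * r) ≤ Real.sinh π := Real.sinh_le_sinh.2 (by nlinarith)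
      have hdr : (0:ℝ) < Real.sinh (π * r) ^ 2 + Real.cosh (π * t) ^ 2 :=
        add_pos_of_nonneg_of_pos (sq_nonneg _) (pow_pos hu 2)
      have hd1 : Real.sinh (π * r) ^ 2 + Real.cosh (π * t) ^ 2 ≤
          Real.sinh π ^ 2 + Real.cosh (π * t) ^ 2 := by nlinarith
      have hlhs : 2 * Real.sinh (π * t) * Real.cosh π /
          (Real.sinh π ^ 2 + Real.cosh (π * t) ^ 2) / Real.cosh π =
          2 * Real.sinh (π * t) / (Real.sinh π ^ 2 + Real.cosh (π * t) ^ 2) := by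
        field_simp
      rw [hlhs]
      have hcr : (1:ℝ) ≤ Real.cosh (π * r) := Real.one_le_cosh _
      apply div_le_div₀ (by positivity) (by nlinarith) hdr hd1
    have heq2 : hFun 1 1 / Real.cosh π =
        2 / (π * Real.sinh π) *
          (Real.arctan (Real.cosh π / Real.sinh π) - Real.arctan (1 / Real.sinh π)) := by
      rw [hFun_eq 1 1 one_pos, mul_one]
      field_simp
    have hA : π / 4 < Real.arctan (Real.cosh π / Real.sinh π) := by
      have hcs : Real.sinh π < Real.cosh π := by
        have h1 := Real.cosh_sub_sinh π
        have h2 := Real.exp_pos (-π)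
        linarith
      have h1 : 1 < Real.cosh π / Real.sinh π := by
        rw [lt_div_iff₀ hsπ]; nlinarith
      calc π / 4 = Real.arctan 1 := Real.arctan_one.symm
        _ < _ := Real.arctan_strictMono h1
    have hB : Real.arctan (1 / Real.sinh π) < 2 / 19 := by
      have h1 : (1:ℝ)/Real.sinh π < 2/19 := by
        rw [div_lt_div_iff₀ hsπ (by norm_num)]; linarith
      linarith [arctan_lt_self' (x := 1 / Real.sinh π) (by positivity)]
    have hfinal : (3:ℝ)/100 < hFun 1 1 / Real.cosh π := by
      rw [heq2]
      have hπ2 : π < 3.15 := Real.pi_lt_d2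
      have hd : (0:ℝ) < π * Real.sinh π := by positivity
      have hre : 2 / (π * Real.sinh π) *
          (Real.arctan (Real.cosh π / Real.sinh π) - Real.arctan (1 / Real.sinh π)) =
          2 * (Real.arctan (Real.cosh π / Real.sinh π) - Real.arctan (1 / Real.sinh π)) /
            (π * Real.sinh π) := by ring
      rw [hre, lt_div_iff₀ hd]
      nlinarith [Real.pi_gt_three, mul_nonneg (sub_pos.2 hπ2).le (sub_pos.2 hs2).le]
    linarith
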